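/- Let K be a field and v_0 = 1 - x_3 - x_0^2 + x_0 x_1 ∈ K[M]. For any nonzero v ∈ K[M] there exist w_1 ∈ K[M] and w_2, w_3 ∈ K[M_1] such that v = v_0 w_1 + x_0 w_2 + w_3, with deg(x_0 w_2) ≤ deg v and deg w_3 ≤ deg v. -/

import Mathlib

/-- The defining relation of Thompson's monoid: `x_j x_i = x_i x_{j+1}` for `i < j`. -/
def thompsonRel : FreeMonoid ℕ → FreeMonoid ℕ → Prop := fun a b =>
  ∃ i j : ℕ, i < j ∧ a = FreeMonoid.of j * FreeMonoid.of i ∧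
    b = FreeMonoid.of i * FreeMonoid.of (j + 1)

/-- The congruence on the free monoid generated by the Thompson relations. -/
def thompsonCon : Con (FreeMonoid ℕ) := conGen thompsonRel

/-- Thompson's monoid `M`. -/
abbrev ThompsonM := thompsonCon.Quotient

/-- The generators `x_n` of Thompson's monoid. -/
def xM (n : ℕ) : ThompsonM := thompsonCon.mk' (FreeMonoid.of n)

/-- The shift endomorphism `φ : M → M`, `x_i ↦ x_{i+1}`. -/
def shiftM : ThompsonM →* ThompsonM :=
  Con.lift _ ((Con.mk' thompsonCon).comp (FreeMonoid.map Nat.succ)) (by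
    apply Con.conGen_le.2
    rintro a b ⟨i, j, hij, rfl, rfl⟩
    simp only [Con.ker_rel, MonoidHom.comp_apply, map_mul, FreeMonoid.map_of]
    exact Con.eq _ |>.2 (ConGen.Rel.of _ _ ⟨i + 1, j + 1, by omega, rfl, rfl⟩))

/-- The relators of Thompson's group `F` (infinite presentation). -/
def thompsonRels : Set (FreeGroup ℕ) :=
  {w | ∃ i j : ℕ, i < j ∧
    w = FreeGroup.of j * FreeGroup.of i * (FreeGroup.of i * FreeGroup.of (j + 1))⁻¹}

/-- Thompson's group `F`. -/
abbrev ThompsonF := PresentedGroup thompsonRels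

/-- The generators `x_n` of Thompson's group. -/
def xF (n : ℕ) : ThompsonF := PresentedGroup.of n

/-- Word length, as a monoid homomorphism on the free monoid. -/
def lenHom : FreeMonoid ℕ →* Multiplicative ℕ where
  toFun w := Multiplicative.ofAdd w.length
  map_one' := by simp
  map_mul' a b := by
    simp [FreeMonoid.length_mul, ofAdd_add]

/-- Length is well defined on Thompson's monoid. -/
def lenM : ThompsonM →* Multiplicative ℕ :=
  Con.lift _ lenHom (by
    apply Con.conGen_le.2
    rintro a b ⟨i, j, hij, rfl, rfl⟩
    simp only [Con.ker_rel]
    show Multiplicative.ofAdd _ = Multiplicative.ofAdd _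
    simp [FreeMonoid.length_mul])

/-- The length of an element of Thompson's monoid. -/
def mlen (g : ThompsonM) : ℕ := Multiplicative.toAdd (lenM g)

/-- The degree of an element of the monoid ring `K[M]`. -/
noncomputable def mdeg {K : Type*} [Field K] (a : MonoidAlgebra K ThompsonM) : ℕ :=
  a.coeff.support.sup mlen

/-- The submonoid `M_i` of `M` generated by `x_i, x_{i+1}, …`. -/
def Msub (i : ℕ) : Submonoid ThompsonM :=
  Submonoid.closure {g | ∃ n : ℕ, i ≤ n ∧ g = xM n}

/-- The shift endomorphism of the monoid ring `K[M]` induced by `φ`. -/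
noncomputable def shiftA (K : Type*) [Field K] :
    MonoidAlgebra K ThompsonM →+* MonoidAlgebra K ThompsonM :=
  MonoidAlgebra.mapDomainRingHom K shiftM

/-- The natural homomorphism of Thompson's monoid into Thompson's group. -/
def iotaMF : ThompsonM →* ThompsonF :=
  Con.lift _ (FreeMonoid.lift xF) (by
    apply Con.conGen_le.2
    rintro a b ⟨i, j, hij, rfl, rfl⟩
    simp only [Con.ker_rel, map_mul, FreeMonoid.lift_eval_of]
    have h : (FreeGroup.of j * FreeGroup.of i *
        (FreeGroup.of i * FreeGroup.of (j + 1))⁻¹ : FreeGroup ℕ) ∈ thompsonRels :=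
      ⟨i, j, hij, rfl⟩
    have h1 : PresentedGroup.mk thompsonRels
        (FreeGroup.of j * FreeGroup.of i * (FreeGroup.of i * FreeGroup.of (j + 1))⁻¹) = 1 := by
      exact (QuotientGroup.eq_one_iff _).2 (Subgroup.subset_normalClosure h)
    have := h1
    rw [map_mul, map_mul, map_inv, map_mul, mul_inv_eq_one] at this
    simpa [xF, PresentedGroup.of] using this)

/-- The generator `x_n` as an element of the group ring `K[F]`. -/
noncomputable def XF (K : Type*) [Field K] (n : ℕ) : MonoidAlgebra K ThompsonF :=
  MonoidAlgebra.of K ThompsonF (xF n)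

/-- The generator `x_n` as an element of the monoid ring `K[M]`. -/
noncomputable def XMa (K : Type*) [Field K] (n : ℕ) : MonoidAlgebra K ThompsonM :=
  MonoidAlgebra.of K ThompsonM (xM n)

namespace Stmt13Aux

lemma xrel {i j : ℕ} (h : i < j) : xM j * xM i = xM i * xM (j + 1) := by
  have h1 : thompsonCon (FreeMonoid.of j * FreeMonoid.of i)
      (FreeMonoid.of i * FreeMonoid.of (j + 1)) :=
    ConGen.Rel.of _ _ ⟨i, j, h, rfl, rfl⟩
  show thompsonCon.mk' (FreeMonoid.of j) * thompsonCon.mk' (FreeMonoid.of i) =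
    thompsonCon.mk' (FreeMonoid.of i) * thompsonCon.mk' (FreeMonoid.of (j + 1))
  rw [← map_mul, ← map_mul]
  exact (Con.eq _).2 h1

lemma mlen_mul (a b : ThompsonM) : mlen (a * b) = mlen a + mlen b := by
  simp [mlen, map_mul]

lemma mlen_one : mlen (1 : ThompsonM) = 0 := by simp [mlen]

lemma mlen_xM (n : ℕ) : mlen (xM n) = 1 := by
  simp [mlen, xM, lenM, lenHom]; rfl

lemma xM_mem {n : ℕ} (h : 1 ≤ n) : xM n ∈ Msub 1 :=
  Submonoid.subset_closure ⟨n, h, rfl⟩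

lemma xM_pow_comm {j : ℕ} (hj : 0 < j) (k : ℕ) :
    xM j * xM 0 ^ k = xM 0 ^ k * xM (j + k) := by
  induction k generalizing j with
  | zero => simp
  | succ k ih =>
    have e : j + 1 + k = j + (k + 1) := by omega
    rw [pow_succ', ← mul_assoc, xrel hj, mul_assoc, ih (by omega), ← mul_assoc, ← pow_succ', e]

lemma exists_normal (g : ThompsonM) :
    ∃ k m, m ∈ Msub 1 ∧ g = xM 0 ^ k * m ∧ mlen g = k + mlen m := by
  induction g using Con.induction_on with
  | _ w =>
    induction w using FreeMonoid.recOn with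
    | one => exact ⟨0, 1, one_mem _, by simp, by simp [mlen_one, mlen]⟩
    | of_mul a w ih =>
      obtain ⟨k, m, hm, he, hl⟩ := ih
      have hmul : ((FreeMonoid.of a * w : FreeMonoid ℕ) : ThompsonM) = xM a * (w : ThompsonM) := by
        rfl
      rcases Nat.eq_zero_or_pos a with rfl | ha
      · refine ⟨k + 1, m, hm, ?_, ?_⟩
        · rw [hmul, he, pow_succ', mul_assoc]
        · rw [hmul, mlen_mul, mlen_xM, hl]; omega
      · refine ⟨k, xM (a + k) * m, mul_mem (xM_mem (by omega)) hm, ?_, ?_⟩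
        · rw [hmul, he, ← mul_assoc, xM_pow_comm ha, mul_assoc]
        · rw [hmul, mlen_mul, mlen_xM, hl, mlen_mul, mlen_xM]; omega

end Stmt13Aux

namespace Stmt13Aux

variable {K : Type*} [Field K]

lemma mdeg_le_iff {a : MonoidAlgebra K ThompsonM} {n : ℕ} :
    mdeg a ≤ n ↔ ∀ g ∈ a.coeff.support, mlen g ≤ n := Finset.sup_le_iff

lemma mdeg_zero : mdeg (0 : MonoidAlgebra K ThompsonM) = 0 := by
  simp [mdeg]

lemma mdeg_add_le (a b : MonoidAlgebra K ThompsonM) :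
    mdeg (a + b) ≤ max (mdeg a) (mdeg b) := by
  classical
  rw [mdeg_le_iff]
  intro g hg
  rcases Finset.mem_union.1 (Finsupp.support_add (g₁ := a.coeff) (g₂ := b.coeff) hg) with h | h
  · exact le_max_of_le_left (Finset.le_sup h)
  · exact le_max_of_le_right (Finset.le_sup h)

lemma mdeg_neg (a : MonoidAlgebra K ThompsonM) : mdeg (-a) = mdeg a := by
  exact congrArg (fun s => Finset.sup s mlen) (Finsupp.support_neg a.coeff)

lemma mdeg_sub_le (a b : MonoidAlgebra K ThompsonM) :
    mdeg (a - b) ≤ max (mdeg a) (mdeg b) := by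
  rw [sub_eq_add_neg]
  simpa [mdeg_neg] using mdeg_add_le a (-b)

lemma mdeg_single_le (g : ThompsonM) (c : K) :
    mdeg (MonoidAlgebra.single g c : MonoidAlgebra K ThompsonM) ≤ mlen g := by
  rw [mdeg_le_iff]
  intro h hh
  have := Finsupp.support_single_subset (a := g) (b := c) hh
  simp only [Finset.mem_singleton] at this
  subst this; exact le_rfl

lemma mdeg_smul_le (c : K) (a : MonoidAlgebra K ThompsonM) :
    mdeg (c • a) ≤ mdeg a := by
  rw [mdeg_le_iff]
  intro g hg
  exact Finset.le_sup (Finsupp.support_smul (g := a.coeff) hg)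

lemma supp_add {P : ThompsonM → Prop} {a b : MonoidAlgebra K ThompsonM}
    (ha : ∀ g ∈ a.coeff.support, P g) (hb : ∀ g ∈ b.coeff.support, P g) :
    ∀ g ∈ (a + b).coeff.support, P g := by
  classical
  intro g hg
  rcases Finset.mem_union.1 (Finsupp.support_add (g₁ := a.coeff) (g₂ := b.coeff) hg) with h | h
  · exact ha g h
  · exact hb g h

lemma supp_sub {P : ThompsonM → Prop} {a b : MonoidAlgebra K ThompsonM}
    (ha : ∀ g ∈ a.coeff.support, P g) (hb : ∀ g ∈ b.coeff.support, P g) :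
    ∀ g ∈ (a - b).coeff.support, P g := by
  rw [sub_eq_add_neg]
  refine supp_add ha ?_
  intro g hg
  rw [MonoidAlgebra.coeff_neg, Finsupp.support_neg] at hg
  exact hb g hg

lemma supp_smul {P : ThompsonM → Prop} {a : MonoidAlgebra K ThompsonM} (c : K)
    (ha : ∀ g ∈ a.coeff.support, P g) : ∀ g ∈ (c • a).coeff.support, P g :=
  fun g hg => ha g (Finsupp.support_smul (g := a.coeff) hg)

lemma supp_single {P : ThompsonM → Prop} {g : ThompsonM} (c : K) (h : P g) :
    ∀ g' ∈ (MonoidAlgebra.single g c : MonoidAlgebra K ThompsonM).coeff.support, P g' := by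
  intro g' hg'
  have := Finsupp.support_single_subset (a := g) (b := c) hg'
  simp only [Finset.mem_singleton] at this
  subst this; exact h

lemma of_eq_single (g : ThompsonM) :
    (MonoidAlgebra.of K ThompsonM g) = MonoidAlgebra.single g 1 := rfl

lemma X0_mul_single (g : ThompsonM) (c : K) :
    XMa K 0 * MonoidAlgebra.single g c = MonoidAlgebra.single (xM 0 * g) c := by
  rw [XMa, of_eq_single, MonoidAlgebra.single_mul_single, one_mul]

end Stmt13Aux

namespace Stmt13Aux

variable (K : Type*) [Field K]

lemma key_base0 (n : ℕ) (m : ThompsonM) (hm : m ∈ Msub 1) (hl : mlen m ≤ n) :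
    ∃ w₁ w₂ w₃ : MonoidAlgebra K ThompsonM,
      (∀ g ∈ w₂.coeff.support, g ∈ Msub 1) ∧ (∀ g ∈ w₃.coeff.support, g ∈ Msub 1) ∧
      MonoidAlgebra.of K ThompsonM (xM 0 ^ 0 * m) =
        (1 - XMa K 3 - XMa K 0 ^ 2 + XMa K 0 * XMa K 1) * w₁ + XMa K 0 * w₂ + w₃ ∧
      mdeg (XMa K 0 * w₂) ≤ n ∧ mdeg w₃ ≤ n := by
  refine ⟨0, 0, MonoidAlgebra.of K ThompsonM m, by simp, ?_, by simp, ?_, ?_⟩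
  · rw [of_eq_single]; exact supp_single 1 hm
  · rw [mul_zero, mdeg_zero]; exact Nat.zero_le n
  · rw [of_eq_single]; exact le_trans (mdeg_single_le m 1) hl

lemma key_base1 (n : ℕ) (m : ThompsonM) (hm : m ∈ Msub 1) (hl : 1 + mlen m ≤ n) :
    ∃ w₁ w₂ w₃ : MonoidAlgebra K ThompsonM,
      (∀ g ∈ w₂.coeff.support, g ∈ Msub 1) ∧ (∀ g ∈ w₃.coeff.support, g ∈ Msub 1) ∧
      MonoidAlgebra.of K ThompsonM (xM 0 ^ 1 * m) =
        (1 - XMa K 3 - XMa K 0 ^ 2 + XMa K 0 * XMa K 1) * w₁ + XMa K 0 * w₂ + w₃ ∧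
      mdeg (XMa K 0 * w₂) ≤ n ∧ mdeg w₃ ≤ n := by
  have hd : mdeg (XMa K 0 * MonoidAlgebra.of K ThompsonM m) ≤ n := by
    rw [of_eq_single, X0_mul_single]
    refine le_trans (mdeg_single_le _ _) ?_
    rw [mlen_mul, mlen_xM]; omega
  refine ⟨0, MonoidAlgebra.of K ThompsonM m, 0, ?_, by simp, ?_, hd, ?_⟩
  · rw [of_eq_single]; exact supp_single 1 hm
  · rw [pow_one, map_mul, mul_zero, zero_add, add_zero]; rfl
  · rw [mdeg_zero]; exact Nat.zero_le n

lemma key : ∀ N n k : ℕ, ∀ m : ThompsonM, n + k ≤ N → m ∈ Msub 1 → k + mlen m ≤ n →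
    ∃ w₁ w₂ w₃ : MonoidAlgebra K ThompsonM,
      (∀ g ∈ w₂.coeff.support, g ∈ Msub 1) ∧ (∀ g ∈ w₃.coeff.support, g ∈ Msub 1) ∧
      MonoidAlgebra.of K ThompsonM (xM 0 ^ k * m) =
        (1 - XMa K 3 - XMa K 0 ^ 2 + XMa K 0 * XMa K 1) * w₁ + XMa K 0 * w₂ + w₃ ∧
      mdeg (XMa K 0 * w₂) ≤ n ∧ mdeg w₃ ≤ n := by
  intro N
  induction N with
  | zero =>
    intro n k m hN hm hlen
    have hk : k = 0 := by omega
    subst hk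
    exact key_base0 K n m hm (by omega)
  | succ N ihN =>
    intro n k m hN hm hlen
    match k with
    | 0 => exact key_base0 K n m hm (by omega)
    | 1 => exact key_base1 K n m hm (by omega)
    | (k+2) =>
      have hmlen : mlen m ≤ n - k - 2 := by omega
      obtain ⟨a₁, a₂, a₃, ha₂, ha₃, hea, hda₂, hda₃⟩ :=
        ihN (n-2) k m (by omega) hm (by omega)
      obtain ⟨b₁, b₂, b₃, hb₂, hb₃, heb, hdb₂, hdb₃⟩ :=
        ihN (n-1) k (xM (3+k) * m) (by omega) (mul_mem (xM_mem (by omega)) hm)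
          (by rw [mlen_mul, mlen_xM]; omega)
      obtain ⟨c₁, c₂, c₃, hc₂, hc₃, hec, hdc₂, hdc₃⟩ :=
        ihN n (k+1) (xM (1+k) * m) (by omega) (mul_mem (xM_mem (by omega)) hm)
          (by rw [mlen_mul, mlen_xM]; omega)
      set Of := MonoidAlgebra.of K ThompsonM with hOf
      set P := Of (xM 0 ^ k * m) with hP
      have hPB : XMa K 3 * P = Of (xM 0 ^ k * (xM (3+k) * m)) := by
        rw [hP, hOf, XMa, ← map_mul, ← mul_assoc, xM_pow_comm (by omega : (0:ℕ) < 3), mul_assoc]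
      have hPC : XMa K 0 * (XMa K 1 * P) = Of (xM 0 ^ (k+1) * (xM (1+k) * m)) := by
        rw [hP, hOf, XMa, XMa, ← map_mul, ← map_mul, ← mul_assoc (xM 1), 
          xM_pow_comm (by omega : (0:ℕ) < 1), mul_assoc, ← mul_assoc (xM 0), ← pow_succ']
      have e2 : xM 0 ^ (k+2) * m = xM 0 ^ 2 * (xM 0 ^ k * m) := by
        rw [← mul_assoc, ← pow_add, Nat.add_comm 2 k]
      have hP2 : Of (xM 0 ^ (k+2) * m) = XMa K 0 ^ 2 * P := by
        rw [hP, hOf, e2, map_mul, map_pow]; rfl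
      refine ⟨a₁ - b₁ + c₁ - P, a₂ - b₂ + c₂, a₃ - b₃ + c₃,
        supp_add (supp_sub ha₂ hb₂) hc₂, supp_add (supp_sub ha₃ hb₃) hc₃, ?_, ?_, ?_⟩
      · have H : (1 - XMa K 3 - XMa K 0 ^ 2 + XMa K 0 * XMa K 1) * (a₁ - b₁ + c₁ - P)
            + XMa K 0 * (a₂ - b₂ + c₂) + (a₃ - b₃ + c₃)
            = ((1 - XMa K 3 - XMa K 0 ^ 2 + XMa K 0 * XMa K 1) * a₁ + XMa K 0 * a₂ + a₃)
            - ((1 - XMa K 3 - XMa K 0 ^ 2 + XMa K 0 * XMa K 1) * b₁ + XMa K 0 * b₂ + b₃)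
            + ((1 - XMa K 3 - XMa K 0 ^ 2 + XMa K 0 * XMa K 1) * c₁ + XMa K 0 * c₂ + c₃)
            - (1 - XMa K 3 - XMa K 0 ^ 2 + XMa K 0 * XMa K 1) * P := by
          noncomm_ring
        rw [hP2, H, ← hea, ← heb, ← hec, ← hPB, ← hPC]
        noncomm_ring
      · rw [mul_add, mul_sub]
        refine le_trans (mdeg_add_le _ _) (max_le (le_trans (mdeg_sub_le _ _)
          (max_le ?_ ?_)) ?_)
        · exact le_trans hda₂ (by omega)
        · exact le_trans hdb₂ (by omega)
        · exact hdc₂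
      · refine le_trans (mdeg_add_le _ _) (max_le (le_trans (mdeg_sub_le _ _)
          (max_le ?_ ?_)) ?_)
        · exact le_trans hda₃ (by omega)
        · exact le_trans hdb₃ (by omega)
        · exact hdc₃

end Stmt13Aux

namespace Stmt13Aux

lemma main (K : Type*) [Field K] (D : ℕ) :
    ∀ v : MonoidAlgebra K ThompsonM, (∀ g ∈ v.coeff.support, mlen g ≤ D) →
    ∃ w₁ w₂ w₃ : MonoidAlgebra K ThompsonM,
      (∀ g ∈ w₂.coeff.support, g ∈ Msub 1) ∧ (∀ g ∈ w₃.coeff.support, g ∈ Msub 1) ∧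
      v = (1 - XMa K 3 - XMa K 0 ^ 2 + XMa K 0 * XMa K 1) * w₁ + XMa K 0 * w₂ + w₃ ∧
      mdeg (XMa K 0 * w₂) ≤ D ∧ mdeg w₃ ≤ D := by
  classical
  intro v
  induction v using MonoidAlgebra.induction with
  | zero =>
    exact fun _ => ⟨0, 0, 0, by simp, by simp, by simp,
      by rw [mul_zero, mdeg_zero]; exact Nat.zero_le D,
      by rw [mdeg_zero]; exact Nat.zero_le D⟩
  | single_add g c f hg hc ih =>
    intro hb
    have hsupp : (MonoidAlgebra.single g c + f).coeff.support = {g} ∪ f.coeff.support := by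
      rw [MonoidAlgebra.coeff_add, MonoidAlgebra.coeff_single, Finsupp.support_add_eq, Finsupp.support_single_ne_zero _ hc]
      rw [Finsupp.support_single_ne_zero _ hc]
      simpa using hg
    have hgD : mlen g ≤ D := hb g (by rw [hsupp]; simp)
    have hfD : ∀ g' ∈ f.coeff.support, mlen g' ≤ D := fun g' h =>
      hb g' (by rw [hsupp]; exact Finset.mem_union_right _ h)
    obtain ⟨k, m, hm, hgkm, hlg⟩ := exists_normal g
    obtain ⟨a₁, a₂, a₃, ha₂, ha₃, hea, hda₂, hda₃⟩ :=
      key K (D + k) D k m le_rfl hm (by omega)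
    obtain ⟨b₁, b₂, b₃, hb₂, hb₃, heb, hdb₂, hdb₃⟩ := ih hfD
    have h0 : MonoidAlgebra.of K ThompsonM g =
        (1 - XMa K 3 - XMa K 0 ^ 2 + XMa K 0 * XMa K 1) * a₁ + XMa K 0 * a₂ + a₃ := by
      rw [hgkm]; exact hea
    have h1 : (MonoidAlgebra.single g c : MonoidAlgebra K ThompsonM) =
        c • MonoidAlgebra.of K ThompsonM g := by
      rw [of_eq_single, MonoidAlgebra.smul_single, smul_eq_mul, mul_one]
    refine ⟨c • a₁ + b₁, c • a₂ + b₂, c • a₃ + b₃,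
      supp_add (supp_smul c ha₂) hb₂, supp_add (supp_smul c ha₃) hb₃, ?_, ?_, ?_⟩
    · rw [h1, h0, heb, mul_add, mul_add, mul_smul_comm, mul_smul_comm, smul_add, smul_add]
      abel
    · have e : XMa K 0 * (c • a₂ + b₂) = c • (XMa K 0 * a₂) + XMa K 0 * b₂ := by
        rw [mul_add, mul_smul_comm]
      rw [e]
      exact le_trans (mdeg_add_le _ _) (max_le (le_trans (mdeg_smul_le _ _) hda₂) hdb₂)
    · exact le_trans (mdeg_add_le _ _) (max_le (le_trans (mdeg_smul_le _ _) hda₃) hdb₃)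

end Stmt13Aux

/-- division with remainder by `v_0 = 1 - x_3 - x_0² + x_0 x_1`:
any nonzero `v ∈ K[M]` can be written `v = v_0 w_1 + x_0 w_2 + w_3` with
`w_2, w_3 ∈ K[M_1]`, `deg(x_0 w_2) ≤ deg v` and `deg w_3 ≤ deg v`. -/
theorem stmt13 (K : Type*) [Field K] (v : MonoidAlgebra K ThompsonM) (hv : v ≠ 0) :
    ∃ w₁ w₂ w₃ : MonoidAlgebra K ThompsonM,
      (∀ g ∈ w₂.coeff.support, g ∈ Msub 1) ∧ (∀ g ∈ w₃.coeff.support, g ∈ Msub 1) ∧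
      v = (1 - XMa K 3 - XMa K 0 ^ 2 + XMa K 0 * XMa K 1) * w₁ + XMa K 0 * w₂ + w₃ ∧
      mdeg (XMa K 0 * w₂) ≤ mdeg v ∧ mdeg w₃ ≤ mdeg v := by
  exact Stmt13Aux.main K (mdeg v) v (fun g hg => Finset.le_sup hg)
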